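/- If Y ~ LCFUSN_{n,m}(Δ), then its cumulative distribution function is F_Y(y) = P(Y₁ ≤ y₁, …, Y_n ≤ y_n) = 2^m · Φ_{n+m}((ln y′, 0′)′ | Ω) for y ∈ (0,∞)^n, where Ω is the (n+m)×(n+m) matrix with blocks Ω = [[I_n, −Δ],[−Δ′, I_m]] and Φ_{n+m}(·|Ω) is the cdf of N_{n+m}(0, Ω). -/

import Mathlib

open MeasureTheory Matrix Real ProbabilityTheory

noncomputable def stdNormalPdf {ι : Type*} [Fintype ι] (x : ι → ℝ) : ℝ :=
  (2 * π) ^ (-(Fintype.card ι : ℝ) / 2) * Real.exp (-(∑ i, x i ^ 2) / 2)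

noncomputable def normalPdf {ι : Type*} [Fintype ι] [DecidableEq ι]
    (μ : ι → ℝ) (S : Matrix ι ι ℝ) (x : ι → ℝ) : ℝ :=
  (2 * π) ^ (-(Fintype.card ι : ℝ) / 2) * S.det ^ (-(1 : ℝ) / 2) *
    Real.exp (-((x - μ) ⬝ᵥ (S⁻¹ *ᵥ (x - μ))) / 2)

noncomputable def normalCdf {ι : Type*} [Fintype ι] [DecidableEq ι]
    (μ : ι → ℝ) (S : Matrix ι ι ℝ) (z : ι → ℝ) : ℝ :=
  ∫ x in Set.Iic z, normalPdf μ S x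

noncomputable def cfusnPdf {ι κ : Type*} [Fintype ι] [Fintype κ] [DecidableEq κ]
    (Δ : Matrix ι κ ℝ) (z : ι → ℝ) : ℝ :=
  2 ^ Fintype.card κ * stdNormalPdf z * normalCdf 0 (1 - Δᵀ * Δ) (Δᵀ *ᵥ z)

noncomputable def lcfusnPdf {ι κ : Type*} [Fintype ι] [Fintype κ] [DecidableEq κ]
    (Δ : Matrix ι κ ℝ) (y : ι → ℝ) : ℝ :=
  if ∀ i, 0 < y i then
    2 ^ Fintype.card κ * (∏ i, y i)⁻¹ * stdNormalPdf (fun i => Real.log (y i)) *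
      normalCdf 0 (1 - Δᵀ * Δ) (Δᵀ *ᵥ fun i => Real.log (y i))
  else 0


section helpers

variable {ι : Type*} [Fintype ι] [DecidableEq ι]

open scoped MatrixOrder

lemma stdNormalPdf_nonneg (x : ι → ℝ) : 0 ≤ stdNormalPdf x := by
  unfold stdNormalPdf
  positivity

lemma normalPdf_nonneg (μ : ι → ℝ) (S : Matrix ι ι ℝ) (x : ι → ℝ) (h : 0 ≤ S.det) :
    0 ≤ normalPdf μ S x := by
  unfold normalPdf
  positivity

lemma normalCdf_nonneg (μ : ι → ℝ) (S : Matrix ι ι ℝ) (z : ι → ℝ) (h : 0 ≤ S.det) :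
    0 ≤ normalCdf μ S z :=
  setIntegral_nonneg measurableSet_Iic fun x _ => normalPdf_nonneg μ S x h

lemma continuous_normalPdf (μ : ι → ℝ) (S : Matrix ι ι ℝ) :
    Continuous (normalPdf μ S) := by
  unfold normalPdf
  refine continuous_const.mul (Real.continuous_exp.comp ?_)
  simp only [dotProduct, Matrix.mulVec]
  fun_prop

lemma continuous_stdNormalPdf : Continuous (stdNormalPdf (ι := ι)) := by
  unfold stdNormalPdf
  refine continuous_const.mul (Real.continuous_exp.comp ?_)
  fun_prop

lemma dotProduct_self_eq_sum_sq (v : ι → ℝ) : v ⬝ᵥ v = ∑ i, v i ^ 2 := by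
  simp [dotProduct, pow_two]

lemma mulVec_sum_sq_le (A : Matrix ι ι ℝ) (u : ι → ℝ) :
    ∑ i, (A *ᵥ u) i ^ 2 ≤ (∑ i, ∑ j, A i j ^ 2) * ∑ j, u j ^ 2 := by
  rw [Finset.sum_mul]
  refine Finset.sum_le_sum fun i _ => ?_
  simpa [Matrix.mulVec, dotProduct] using
    Finset.sum_mul_sq_le_sq_mul_sq Finset.univ (fun j => A i j) u

/-- coercivity of a positive definite quadratic form -/
lemma posdef_exists_coercive {M : Matrix ι ι ℝ} (hM : M.PosDef) :
    ∃ ε : ℝ, 0 < ε ∧ ∀ v : ι → ℝ, ε * ∑ i, v i ^ 2 ≤ v ⬝ᵥ M *ᵥ v := by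
  set R := CFC.sqrt M with hR
  have hRsym : Rᵀ = R := (CFC.sqrt_nonneg M).posSemidef.1
  have hRR : R * R = M := CFC.sqrt_mul_sqrt_self M hM.posSemidef.nonneg
  have hdet : IsUnit R.det := by
    have : R.det * R.det = M.det := by rw [← Matrix.det_mul, hRR]
    have hM0 : M.det ≠ 0 := ne_of_gt hM.det_pos
    exact isUnit_iff_ne_zero.mpr fun h => hM0 (by rw [← this, h, mul_zero])
  set C := ∑ i, ∑ j, (R⁻¹) i j ^ 2 with hC
  have hC0 : 0 ≤ C := Finset.sum_nonneg fun i _ => Finset.sum_nonneg fun j _ => sq_nonneg _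
  refine ⟨(C + 1)⁻¹, by positivity, fun v => ?_⟩
  have hquad : v ⬝ᵥ M *ᵥ v = ∑ i, (R *ᵥ v) i ^ 2 := by
    rw [← dotProduct_self_eq_sum_sq, ← hRR, ← Matrix.mulVec_mulVec, Matrix.dotProduct_mulVec,
      ← hRsym, Matrix.vecMul_transpose, hRsym]
  have hrec : ∀ i, v i = (R⁻¹ *ᵥ (R *ᵥ v)) i := by
    intro i; rw [Matrix.mulVec_mulVec, Matrix.nonsing_inv_mul R hdet, Matrix.one_mulVec]
  have hb : ∑ i, v i ^ 2 ≤ C * ∑ i, (R *ᵥ v) i ^ 2 := by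
    calc ∑ i, v i ^ 2 = ∑ i, (R⁻¹ *ᵥ (R *ᵥ v)) i ^ 2 := by
          refine Finset.sum_congr rfl fun i _ => ?_; rw [← hrec]
      _ ≤ C * ∑ i, (R *ᵥ v) i ^ 2 := mulVec_sum_sq_le _ _
  rw [hquad]
  have hsq : 0 ≤ ∑ i, (R *ᵥ v) i ^ 2 := Finset.sum_nonneg fun i _ => sq_nonneg _
  rw [inv_mul_le_iff₀ (by positivity)]
  calc ∑ i, v i ^ 2 ≤ C * ∑ i, (R *ᵥ v) i ^ 2 := hb
    _ ≤ (C + 1) * ∑ i, (R *ᵥ v) i ^ 2 := by nlinarith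

lemma integrable_normalPdf {S : Matrix ι ι ℝ} (hS : S.PosDef) :
    Integrable (normalPdf 0 S) := by
  obtain ⟨ε, hε, hco⟩ := posdef_exists_coercive hS.inv
  have hbound : ∀ x : ι → ℝ, ‖normalPdf 0 S x‖ ≤
      S.det ^ (-(1:ℝ)/2) * ∏ i, Real.exp (-(ε/2) * x i ^ 2) := by
    intro x
    have h1 : (2 * π) ^ (-(Fintype.card ι : ℝ) / 2) ≤ 1 := by
      apply Real.rpow_le_one_of_one_le_of_nonpos
      · nlinarith [Real.pi_gt_three]
      · have : (0:ℝ) ≤ (Fintype.card ι : ℝ) := Nat.cast_nonneg _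
        linarith
    have h2 : Real.exp (-((x - 0) ⬝ᵥ (S⁻¹ *ᵥ (x - 0))) / 2) ≤
        ∏ i, Real.exp (-(ε/2) * x i ^ 2) := by
      rw [← Real.exp_sum]
      apply Real.exp_le_exp.mpr
      have := hco x
      simp only [sub_zero]
      have hsum : ∑ i, -(ε/2) * x i ^ 2 = -(ε/2) * ∑ i, x i ^ 2 := by
        rw [← Finset.mul_sum]
      rw [hsum]
      linarith
    rw [Real.norm_eq_abs, abs_of_nonneg (normalPdf_nonneg _ _ _ hS.det_pos.le)]
    unfold normalPdf
    have hd : (0:ℝ) ≤ S.det ^ (-(1:ℝ)/2) := Real.rpow_nonneg hS.det_pos.le _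
    calc (2 * π) ^ (-(Fintype.card ι : ℝ) / 2) * S.det ^ (-(1:ℝ)/2) *
          Real.exp (-((x - 0) ⬝ᵥ (S⁻¹ *ᵥ (x - 0))) / 2)
        ≤ 1 * S.det ^ (-(1:ℝ)/2) * ∏ i, Real.exp (-(ε/2) * x i ^ 2) := by
          apply mul_le_mul (by nlinarith [Real.exp_nonneg (-((x - 0) ⬝ᵥ (S⁻¹ *ᵥ (x - 0))) / 2)]) h2 (Real.exp_nonneg _) (by nlinarith)
      _ = S.det ^ (-(1:ℝ)/2) * ∏ i, Real.exp (-(ε/2) * x i ^ 2) := by ring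
  have hint : Integrable (fun x : ι → ℝ => S.det ^ (-(1:ℝ)/2) * ∏ i, Real.exp (-(ε/2) * x i ^ 2)) := by
    refine Integrable.const_mul ?_ _
    exact Integrable.fintype_prod (f := fun (i : ι) (t : ℝ) => Real.exp (-(ε/2) * t ^ 2))
      (fun i => integrable_exp_neg_mul_sq (by positivity))
  exact hint.mono' ((continuous_normalPdf 0 S).aestronglyMeasurable) (ae_of_all _ hbound)

end helpers

section mat
variable {n m : ℕ} (Δ : Matrix (Fin n) (Fin m) ℝ)

-- reformulated hypothesis
lemma hDelta' (hΔ : ∀ a : Fin m → ℝ, Real.sqrt (∑ j, a j ^ 2) = 1 →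
      Real.sqrt (∑ i, (Δ *ᵥ a) i ^ 2) < 1)
    {w : Fin m → ℝ} (hw : w ≠ 0) : ∑ i, (Δ *ᵥ w) i ^ 2 < ∑ j, w j ^ 2 := by
  have hpos : 0 < ∑ j, w j ^ 2 := by
    obtain ⟨j, hj⟩ := Function.ne_iff.mp hw
    have : (0:ℝ) < w j ^ 2 := pow_two_pos_of_ne_zero hj
    exact this.trans_le (Finset.single_le_sum (fun i _ => sq_nonneg (w i)) (Finset.mem_univ j))
  set c := Real.sqrt (∑ j, w j ^ 2) with hc
  have hc0 : 0 < c := Real.sqrt_pos.mpr hpos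
  have hc2 : c ^ 2 = ∑ j, w j ^ 2 := Real.sq_sqrt hpos.le
  have key := hΔ (c⁻¹ • w) ?_
  · have hΔv : Δ *ᵥ (c⁻¹ • w) = c⁻¹ • (Δ *ᵥ w) := by
      rw [Matrix.mulVec_smul]
    rw [hΔv] at key
    have hsum : ∑ i, (c⁻¹ • (Δ *ᵥ w)) i ^ 2 = c⁻¹ ^ 2 * ∑ i, (Δ *ᵥ w) i ^ 2 := by
      rw [Finset.mul_sum]; refine Finset.sum_congr rfl fun i _ => ?_
      simp [Pi.smul_apply, smul_eq_mul, mul_pow]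
    rw [hsum] at key
    have hnn : 0 ≤ c⁻¹ ^ 2 * ∑ i, (Δ *ᵥ w) i ^ 2 := by positivity
    have hlt : c⁻¹ ^ 2 * ∑ i, (Δ *ᵥ w) i ^ 2 < 1 := by
      nlinarith [Real.sq_sqrt hnn, Real.sqrt_nonneg (c⁻¹ ^ 2 * ∑ i, (Δ *ᵥ w) i ^ 2)]
    have : c⁻¹ ^ 2 = (∑ j, w j ^ 2)⁻¹ := by rw [← hc2]; simp
    rw [this] at hlt
    calc ∑ i, (Δ *ᵥ w) i ^ 2 = (∑ j, w j ^ 2) * ((∑ j, w j ^ 2)⁻¹ * ∑ i, (Δ *ᵥ w) i ^ 2) := by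
          field_simp
      _ < (∑ j, w j ^ 2) * 1 := by exact mul_lt_mul_of_pos_left hlt hpos
      _ = ∑ j, w j ^ 2 := mul_one _
  · have : ∑ j, (c⁻¹ • w) j ^ 2 = c⁻¹ ^ 2 * ∑ j, w j ^ 2 := by
      rw [Finset.mul_sum]; refine Finset.sum_congr rfl fun j _ => ?_
      simp [Pi.smul_apply, smul_eq_mul, mul_pow]
    rw [this, ← hc2]
    rw [show c⁻¹ ^ 2 * c ^ 2 = 1 by field_simp]
    exact Real.sqrt_one

lemma dotProduct_transpose_mulVec (x : Fin n → ℝ) (u : Fin m → ℝ) :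
    x ⬝ᵥ (Δ *ᵥ u) = (Δᵀ *ᵥ x) ⬝ᵥ u := by
  rw [Matrix.dotProduct_mulVec, ← Matrix.mulVec_transpose]

lemma posDef_S (hΔ : ∀ a : Fin m → ℝ, Real.sqrt (∑ j, a j ^ 2) = 1 →
      Real.sqrt (∑ i, (Δ *ᵥ a) i ^ 2) < 1) : (1 - Δᵀ * Δ).PosDef := by
  rw [posDef_iff_dotProduct_mulVec]
  constructor
  · unfold Matrix.IsHermitian
    rw [conjTranspose_eq_transpose_of_trivial, transpose_sub, transpose_one, transpose_mul,
      transpose_transpose]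
  · intro x hx
    have : star x = x := by simp
    rw [this, Matrix.sub_mulVec, Matrix.one_mulVec, dotProduct_sub,
      ← Matrix.mulVec_mulVec]
    have h1 : x ⬝ᵥ (Δᵀ *ᵥ (Δ *ᵥ x)) = (Δ *ᵥ x) ⬝ᵥ (Δ *ᵥ x) := by
      rw [Matrix.dotProduct_mulVec, Matrix.vecMul_transpose]
    rw [h1, dotProduct_self_eq_sum_sq, dotProduct_self_eq_sum_sq]
    have := hDelta' Δ hΔ hx
    linarith

lemma posDef_Omega (hΔ : ∀ a : Fin m → ℝ, Real.sqrt (∑ j, a j ^ 2) = 1 →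
      Real.sqrt (∑ i, (Δ *ᵥ a) i ^ 2) < 1) :
    (Matrix.fromBlocks (1 : Matrix (Fin n) (Fin n) ℝ) (-Δ) (-Δᵀ) 1).PosDef := by
  rw [posDef_iff_dotProduct_mulVec]
  constructor
  · unfold Matrix.IsHermitian
    rw [conjTranspose_eq_transpose_of_trivial, fromBlocks_transpose, transpose_one,
      transpose_one, transpose_neg, transpose_neg, transpose_transpose]
  · intro v hv
    have hsv : star v = v := by simp
    set x : Fin n → ℝ := v ∘ Sum.inl with hxdef
    set w : Fin m → ℝ := v ∘ Sum.inr with hwdef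
    have hv' : v = Sum.elim x w := by
      funext s; cases s <;> rfl
    rw [hsv, hv', Matrix.fromBlocks_mulVec]
    simp only [Sum.elim_comp_inl, Sum.elim_comp_inr]
    rw [sumElim_dotProduct_sumElim]
    simp only [Matrix.one_mulVec, Matrix.neg_mulVec]
    rw [dotProduct_add, dotProduct_add]
    rw [dotProduct_neg, dotProduct_neg]
    have e1 : w ⬝ᵥ (Δᵀ *ᵥ x) = x ⬝ᵥ (Δ *ᵥ w) := by
      rw [Matrix.dotProduct_mulVec, Matrix.vecMul_transpose, dotProduct_comm]
    rw [e1, dotProduct_self_eq_sum_sq, dotProduct_self_eq_sum_sq]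
    -- goal: 0 < ∑ x² - x⬝Δw + (-(x⬝Δw) + ∑ w²)
    by_cases hw : w = 0
    · have hx0 : x ≠ 0 := by
        intro hx0
        apply hv
        rw [hv', hx0, hw]; funext s; cases s <;> rfl
      have hxpos : 0 < ∑ i, x i ^ 2 := by
        obtain ⟨j, hj⟩ := Function.ne_iff.mp hx0
        have : (0:ℝ) < x j ^ 2 := pow_two_pos_of_ne_zero hj
        exact this.trans_le (Finset.single_le_sum (fun i _ => sq_nonneg (x i)) (Finset.mem_univ j))
      rw [hw]
      simp [Matrix.mulVec_zero, hxpos]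
    · have hQ := hDelta' Δ hΔ hw
      have hCS : (x ⬝ᵥ (Δ *ᵥ w)) ^ 2 ≤ (∑ i, x i ^ 2) * ∑ i, (Δ *ᵥ w) i ^ 2 := by
        simpa [dotProduct] using
          Finset.sum_mul_sq_le_sq_mul_sq Finset.univ x (Δ *ᵥ w)
      have hP : 0 ≤ ∑ i, x i ^ 2 := Finset.sum_nonneg fun i _ => sq_nonneg _
      have hR : 0 ≤ ∑ i, (Δ *ᵥ w) i ^ 2 := Finset.sum_nonneg fun i _ => sq_nonneg _
      nlinarith [sq_nonneg ((∑ i, x i ^ 2) - ∑ i, (Δ *ᵥ w) i ^ 2),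
        sq_nonneg ((∑ i, x i ^ 2) + ∑ i, (Δ *ᵥ w) i ^ 2 - 2 * (x ⬝ᵥ (Δ *ᵥ w)))]

end mat

section mat2
variable {n m : ℕ} (Δ : Matrix (Fin n) (Fin m) ℝ)

lemma det_Omega : (Matrix.fromBlocks (1 : Matrix (Fin n) (Fin n) ℝ) (-Δ) (-Δᵀ) 1).det
    = (1 - Δᵀ * Δ).det := by
  rw [Matrix.det_fromBlocks_one₁₁]
  congr 1
  simp [Matrix.neg_mul, Matrix.mul_neg]

lemma blocks_inverse_algebra (T : Matrix (Fin m) (Fin m) ℝ)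
    (h1 : (1 - Δᵀ * Δ) * T = 1) :
    Matrix.fromBlocks (1 : Matrix (Fin n) (Fin n) ℝ) (-Δ) (-Δᵀ) 1 *
      Matrix.fromBlocks (1 + Δ * T * Δᵀ) (Δ * T) (T * Δᵀ) T = 1 := by
  have h1' : T - Δᵀ * (Δ * T) = 1 := by
    rw [← h1, Matrix.sub_mul, Matrix.one_mul, Matrix.mul_assoc]
  have h2 : Δᵀ * (Δ * T) = T - 1 := by rw [← h1']; abel
  have h3 : Δᵀ * (Δ * (T * Δᵀ)) = T * Δᵀ - Δᵀ := by
    have := congrArg (fun X => X * Δᵀ) h2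
    simpa [Matrix.mul_assoc, Matrix.sub_mul, Matrix.one_mul] using this
  rw [Matrix.fromBlocks_multiply]
  have e11 : (1 : Matrix (Fin n) (Fin n) ℝ) * (1 + Δ * T * Δᵀ) + (-Δ) * (T * Δᵀ) = 1 := by
    simp only [Matrix.neg_mul, Matrix.one_mul, Matrix.mul_one, Matrix.mul_add, Matrix.add_mul,
      Matrix.sub_mul, Matrix.mul_assoc, h2, h3]
    abel
  have e12 : (1 : Matrix (Fin n) (Fin n) ℝ) * (Δ * T) + (-Δ) * T = 0 := by
    simp only [Matrix.neg_mul, Matrix.one_mul]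
    abel
  have e21 : (-Δᵀ) * (1 + Δ * T * Δᵀ) + (1 : Matrix (Fin m) (Fin m) ℝ) * (T * Δᵀ) = 0 := by
    simp only [Matrix.neg_mul, Matrix.one_mul, Matrix.mul_one, Matrix.mul_add, Matrix.add_mul,
      Matrix.sub_mul, Matrix.mul_assoc, h2, h3]
    abel
  have e22 : (-Δᵀ) * (Δ * T) + (1 : Matrix (Fin m) (Fin m) ℝ) * T = 1 := by
    simp only [Matrix.neg_mul, Matrix.one_mul, h2]
    abel
  rw [e11, e12, e21, e22, Matrix.fromBlocks_one]

lemma inv_Omega (hS : IsUnit (1 - Δᵀ * Δ).det) :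
    (Matrix.fromBlocks (1 : Matrix (Fin n) (Fin n) ℝ) (-Δ) (-Δᵀ) 1)⁻¹ =
      Matrix.fromBlocks (1 + Δ * (1 - Δᵀ * Δ)⁻¹ * Δᵀ) (Δ * (1 - Δᵀ * Δ)⁻¹)
        ((1 - Δᵀ * Δ)⁻¹ * Δᵀ) (1 - Δᵀ * Δ)⁻¹ :=
  Matrix.inv_eq_right_inv
    (blocks_inverse_algebra Δ (1 - Δᵀ * Δ)⁻¹ (Matrix.mul_nonsing_inv _ hS))

lemma quad_Omega (hS : IsUnit (1 - Δᵀ * Δ).det) (x : Fin n → ℝ) (w : Fin m → ℝ) :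
    (Sum.elim x w) ⬝ᵥ ((Matrix.fromBlocks (1 : Matrix (Fin n) (Fin n) ℝ) (-Δ) (-Δᵀ) 1)⁻¹ *ᵥ
      Sum.elim x w) =
      (∑ i, x i ^ 2) + (w + Δᵀ *ᵥ x) ⬝ᵥ ((1 - Δᵀ * Δ)⁻¹ *ᵥ (w + Δᵀ *ᵥ x)) := by
  rw [inv_Omega Δ hS]
  rw [Matrix.fromBlocks_mulVec]
  simp only [Sum.elim_comp_inl, Sum.elim_comp_inr, sumElim_dotProduct_sumElim,
    Matrix.add_mulVec, Matrix.one_mulVec, Matrix.mulVec_add, ← Matrix.mulVec_mulVec,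
    dotProduct_add, add_dotProduct]
  simp only [_root_.dotProduct_transpose_mulVec Δ, dotProduct_self_eq_sum_sq]
  ring

lemma pdf_factor (hS : IsUnit (1 - Δᵀ * Δ).det) (x : Fin n → ℝ) (w : Fin m → ℝ) :
    normalPdf 0 (Matrix.fromBlocks (1 : Matrix (Fin n) (Fin n) ℝ) (-Δ) (-Δᵀ) 1) (Sum.elim x w)
      = stdNormalPdf x * normalPdf 0 (1 - Δᵀ * Δ) (w + Δᵀ *ᵥ x) := by
  unfold normalPdf stdNormalPdf
  rw [sub_zero, sub_zero, quad_Omega Δ hS, det_Omega Δ]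
  have hcard : (Fintype.card (Fin n ⊕ Fin m) : ℝ) = (Fintype.card (Fin n) : ℝ) + Fintype.card (Fin m) := by
    simp [Fintype.card_sum]
  rw [hcard]
  have hpow : (2 * π) ^ (-((Fintype.card (Fin n) : ℝ) + Fintype.card (Fin m)) / 2)
      = (2 * π) ^ (-(Fintype.card (Fin n) : ℝ) / 2) * (2 * π) ^ (-(Fintype.card (Fin m) : ℝ) / 2) := by
    rw [← Real.rpow_add (by positivity)]
    congr 1
    ring
  rw [hpow]
  rw [show -((∑ i, x i ^ 2) + (w + Δᵀ *ᵥ x) ⬝ᵥ ((1 - Δᵀ * Δ)⁻¹ *ᵥ (w + Δᵀ *ᵥ x))) / 2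
      = (-(∑ i, x i ^ 2) / 2) + (-((w + Δᵀ *ᵥ x) ⬝ᵥ ((1 - Δᵀ * Δ)⁻¹ *ᵥ (w + Δᵀ *ᵥ x))) / 2) by ring]
  rw [Real.exp_add]
  ring

end mat2

-- derivative of componentwise exp
noncomputable def expDeriv (n : ℕ) (x : Fin n → ℝ) : (Fin n → ℝ) →L[ℝ] (Fin n → ℝ) :=
  LinearMap.toContinuousLinearMap (Matrix.toLin' (Matrix.diagonal fun i => Real.exp (x i)))

lemma expDeriv_hasFDerivAt (n : ℕ) (x : Fin n → ℝ) :
    HasFDerivAt (fun u : Fin n → ℝ => fun i => Real.exp (u i)) (expDeriv n x) x := by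
  rw [hasFDerivAt_pi']
  intro i
  have base : HasFDerivAt (fun u : Fin n → ℝ => Real.exp (u i))
      (Real.exp (x i) • ContinuousLinearMap.proj i) x :=
    (hasFDerivAt_apply i x).exp
  have heq : ContinuousLinearMap.proj i ∘L expDeriv n x = Real.exp (x i) • ContinuousLinearMap.proj i := by
    ext v
    simp [expDeriv, Matrix.toLin'_apply, Matrix.mulVec_diagonal]
  rw [heq]; exact base

lemma expDeriv_det (n : ℕ) (x : Fin n → ℝ) :
    (expDeriv n x).det = ∏ i, Real.exp (x i) := by
  have : ((expDeriv n x) : (Fin n → ℝ) →ₗ[ℝ] (Fin n → ℝ))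
      = Matrix.toLin' (Matrix.diagonal fun i => Real.exp (x i)) := by
    simp [expDeriv]
  rw [ContinuousLinearMap.det, this, LinearMap.det_toLin', Matrix.det_diagonal]

lemma exp_image_Iic (n : ℕ) (y : Fin n → ℝ) (hy : ∀ i, 0 < y i) :
    (fun u : Fin n → ℝ => fun i => Real.exp (u i)) '' Set.Iic (fun i => Real.log (y i))
      = Set.Iic y ∩ {u | ∀ i, 0 < u i} := by
  ext u
  simp only [Set.mem_image, Set.mem_inter_iff, Set.mem_Iic, Set.mem_setOf_eq]
  constructor
  · rintro ⟨x, hx, rfl⟩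
    refine ⟨fun i => ?_, fun i => Real.exp_pos _⟩
    calc Real.exp (x i) ≤ Real.exp (Real.log (y i)) := Real.exp_le_exp.mpr (hx i)
      _ = y i := Real.exp_log (hy i)
  · rintro ⟨hle, hpos⟩
    refine ⟨fun i => Real.log (u i), fun i => ?_, ?_⟩
    · exact Real.log_le_log (hpos i) (hle i)
    · funext i; exact Real.exp_log (hpos i)

lemma exp_injOn (n : ℕ) (s : Set (Fin n → ℝ)) :
    Set.InjOn (fun u : Fin n → ℝ => fun i => Real.exp (u i)) s := by
  intro a _ b _ hab
  funext i
  exact Real.exp_injective (congrFun hab i)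


/-- If `Y ~ LCFUSN_{n,m}(Δ)`, then its cdf is
`F_Y(y) = 2^m Φ_{n+m}((ln y, 0) | Ω)` for `y ∈ (0,∞)^n`, where
`Ω = [[I_n, -Δ],[-Δᵀ, I_m]]`. -/
theorem lcfusn_cdf
    {Ω : Type*} [MeasureSpace Ω] [IsProbabilityMeasure (volume : Measure Ω)]
    (n m : ℕ) (Δ : Matrix (Fin n) (Fin m) ℝ)
    (hΔ : ∀ a : Fin m → ℝ, Real.sqrt (∑ j, a j ^ 2) = 1 →
      Real.sqrt (∑ i, (Δ *ᵥ a) i ^ 2) < 1)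
    (Y : Ω → Fin n → ℝ) (hY : Measurable Y)
    (hlaw : Measure.map Y volume =
      (volume : Measure (Fin n → ℝ)).withDensity fun y => ENNReal.ofReal (lcfusnPdf Δ y)) :
    ∀ y : Fin n → ℝ, (∀ i, 0 < y i) →
      (volume {ω | ∀ i, Y ω i ≤ y i}).toReal =
        2 ^ m * normalCdf 0 (Matrix.fromBlocks 1 (-Δ) (-Δᵀ) 1)
          (Sum.elim (fun i => Real.log (y i)) (0 : Fin m → ℝ)) := by
  intro y hy
  have hSpd : (1 - Δᵀ * Δ).PosDef := posDef_S Δ hΔ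
  have hSdet : 0 < (1 - Δᵀ * Δ).det := hSpd.det_pos
  have hSunit : IsUnit (1 - Δᵀ * Δ).det := isUnit_iff_ne_zero.mpr hSdet.ne'
  have hΩpd : (Matrix.fromBlocks (1 : Matrix (Fin n) (Fin n) ℝ) (-Δ) (-Δᵀ) 1).PosDef :=
    posDef_Omega Δ hΔ
  have hΩdet : 0 < (Matrix.fromBlocks (1 : Matrix (Fin n) (Fin n) ℝ) (-Δ) (-Δᵀ) 1).det := by
    rw [det_Omega]; exact hSdet
  set t : Fin n → ℝ := fun i => Real.log (y i) with ht
  have hmv : Continuous fun x : Fin n → ℝ => Δᵀ *ᵥ x := by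
    apply continuous_pi
    intro i
    simp only [Matrix.mulVec, dotProduct]
    exact continuous_finset_sum _ fun j _ => continuous_const.mul (continuous_apply j)
  have hsetY : {ω | ∀ i, Y ω i ≤ y i} = Y ⁻¹' Set.Iic y := by
    ext ω; simp [Set.mem_Iic, Pi.le_def, Set.mem_setOf_eq]
  -- shift identity
  have hshift : ∀ c : Fin m → ℝ,
      (∫⁻ w in Set.Iic (0 : Fin m → ℝ), ENNReal.ofReal (normalPdf 0 (1 - Δᵀ * Δ) (w + c)))
        = ENNReal.ofReal (normalCdf 0 (1 - Δᵀ * Δ) c) := by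
    intro c
    have hswap : (∫⁻ w in Set.Iic (0 : Fin m → ℝ),
          ENNReal.ofReal (normalPdf 0 (1 - Δᵀ * Δ) (w + c)))
        = ∫⁻ u in Set.Iic c, ENNReal.ofReal (normalPdf 0 (1 - Δᵀ * Δ) u) := by
      rw [← lintegral_indicator measurableSet_Iic, ← lintegral_indicator measurableSet_Iic]
      have key : ∀ w : Fin m → ℝ,
          (Set.Iic (0 : Fin m → ℝ)).indicator
              (fun w => ENNReal.ofReal (normalPdf 0 (1 - Δᵀ * Δ) (w + c))) w
            = (Set.Iic c).indicator (fun u => ENNReal.ofReal (normalPdf 0 (1 - Δᵀ * Δ) u))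
              (w + c) := by
        intro w
        by_cases hw : w ∈ Set.Iic (0 : Fin m → ℝ)
        · rw [Set.indicator_of_mem hw, Set.indicator_of_mem]
          simpa using add_le_add_right (Set.mem_Iic.mp hw) c
        · rw [Set.indicator_of_notMem hw, Set.indicator_of_notMem]
          intro hmem
          have h' : w + c ≤ 0 + c := by simpa using Set.mem_Iic.mp hmem
          exact hw (Set.mem_Iic.mpr (le_of_add_le_add_right h'))
      rw [lintegral_congr key]
      exact lintegral_add_right_eq_self _ c
    rw [hswap]
    exact (MeasureTheory.ofReal_integral_eq_lintegral_ofReal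
      ((integrable_normalPdf hSpd).integrableOn)
      (ae_of_all _ fun w => normalPdf_nonneg _ _ w hSdet.le)).symm
  -- Omega side : reduce (n+m)-dim integral to n-dim integral
  have hOmega : (∫⁻ z in Set.Iic (Sum.elim t (0 : Fin m → ℝ)),
        ENNReal.ofReal (normalPdf 0 (Matrix.fromBlocks 1 (-Δ) (-Δᵀ) 1) z))
      = ∫⁻ x in Set.Iic t,
          ENNReal.ofReal (stdNormalPdf x * normalCdf 0 (1 - Δᵀ * Δ) (Δᵀ *ᵥ x)) := by
    have hmp := MeasureTheory.volume_measurePreserving_sumPiEquivProdPi_symm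
      (fun _ : Fin n ⊕ Fin m => ℝ)
    have hemb :=
      (MeasurableEquiv.sumPiEquivProdPi (fun _ : Fin n ⊕ Fin m => ℝ)).symm.measurableEmbedding
    have him : (MeasurableEquiv.sumPiEquivProdPi (fun _ : Fin n ⊕ Fin m => ℝ)).symm ''
        (Set.Iic t ×ˢ Set.Iic (0 : Fin m → ℝ)) = Set.Iic (Sum.elim t (0 : Fin m → ℝ)) := by
      ext z
      simp only [Set.mem_image, Set.mem_prod, Set.mem_Iic]
      constructor
      · rintro ⟨⟨p1, p2⟩, ⟨h1, h2⟩, rfl⟩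
        intro s
        cases s with
        | inl i => exact h1 i
        | inr j => exact h2 j
      · intro hz
        refine ⟨(fun i => z (Sum.inl i), fun j => z (Sum.inr j)), ⟨fun i => hz (Sum.inl i),
          fun j => hz (Sum.inr j)⟩, ?_⟩
        funext s
        cases s <;> rfl
    have h1 : (∫⁻ z in Set.Iic (Sum.elim t (0 : Fin m → ℝ)),
          ENNReal.ofReal (normalPdf 0 (Matrix.fromBlocks 1 (-Δ) (-Δᵀ) 1) z))
        = ∫⁻ p in Set.Iic t ×ˢ Set.Iic (0 : Fin m → ℝ),
            ENNReal.ofReal (stdNormalPdf p.1 * normalPdf 0 (1 - Δᵀ * Δ) (p.2 + Δᵀ *ᵥ p.1))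
            ∂((volume : Measure (Fin n → ℝ)).prod (volume : Measure (Fin m → ℝ))) := by
      rw [← him, ← hmp.setLIntegral_comp_emb hemb
        (fun z => ENNReal.ofReal (normalPdf 0 (Matrix.fromBlocks 1 (-Δ) (-Δᵀ) 1) z)) _]
      apply setLIntegral_congr_fun (measurableSet_Iic.prod measurableSet_Iic)
      rintro ⟨p1, p2⟩ _
      have hev : (MeasurableEquiv.sumPiEquivProdPi (fun _ : Fin n ⊕ Fin m => ℝ)).symm (p1, p2)
          = Sum.elim p1 p2 := by
        funext s
        cases s <;> rfl
      dsimp only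
      rw [hev, pdf_factor Δ hSunit]
    rw [h1, ← Measure.prod_restrict]
    have hfm : Measurable fun p : (Fin n → ℝ) × (Fin m → ℝ) =>
        ENNReal.ofReal (stdNormalPdf p.1 * normalPdf 0 (1 - Δᵀ * Δ) (p.2 + Δᵀ *ᵥ p.1)) := by
      apply ENNReal.measurable_ofReal.comp
      exact ((continuous_stdNormalPdf.comp continuous_fst).mul
        ((continuous_normalPdf 0 (1 - Δᵀ * Δ)).comp
          (continuous_snd.add (hmv.comp continuous_fst)))).measurable
    rw [lintegral_prod _ hfm.aemeasurable]
    apply lintegral_congr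
    intro x
    have hpt : ∀ w : Fin m → ℝ,
        ENNReal.ofReal (stdNormalPdf x * normalPdf 0 (1 - Δᵀ * Δ) (w + Δᵀ *ᵥ x))
          = ENNReal.ofReal (stdNormalPdf x)
            * ENNReal.ofReal (normalPdf 0 (1 - Δᵀ * Δ) (w + Δᵀ *ᵥ x)) :=
      fun w => ENNReal.ofReal_mul (stdNormalPdf_nonneg x)
    rw [lintegral_congr hpt, lintegral_const_mul' _ _ ENNReal.ofReal_ne_top, hshift (Δᵀ *ᵥ x),
      ← ENNReal.ofReal_mul (stdNormalPdf_nonneg x)]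
  -- restrict to positive orthant
  have hP : MeasurableSet {u : Fin n → ℝ | ∀ i, 0 < u i} := by
    have : {u : Fin n → ℝ | ∀ i, 0 < u i} = ⋂ i, {u | 0 < u i} := by ext; simp
    rw [this]
    exact MeasurableSet.iInter fun i => measurableSet_lt measurable_const (measurable_pi_apply i)
  have hrestr : (∫⁻ u in Set.Iic y, ENNReal.ofReal (lcfusnPdf Δ u))
      = ∫⁻ u in Set.Iic y ∩ {u | ∀ i, 0 < u i}, ENNReal.ofReal (lcfusnPdf Δ u) := by
    rw [← lintegral_indicator measurableSet_Iic, ← lintegral_indicator (measurableSet_Iic.inter hP)]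
    apply lintegral_congr
    intro u
    by_cases h1 : u ∈ Set.Iic y
    · by_cases h2 : ∀ i, 0 < u i
      · rw [Set.indicator_of_mem h1, Set.indicator_of_mem (Set.mem_inter h1 (Set.mem_setOf_eq ▸ h2))]
      · rw [Set.indicator_of_mem h1, Set.indicator_of_notMem
          (fun hmem => h2 hmem.2)]
        simp [lcfusnPdf, h2]
    · rw [Set.indicator_of_notMem h1, Set.indicator_of_notMem fun hmem => h1 hmem.1]
  -- change of variables u = exp x
  have hcov : (∫⁻ u in Set.Iic y ∩ {u | ∀ i, 0 < u i}, ENNReal.ofReal (lcfusnPdf Δ u))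
      = ∫⁻ x in Set.Iic t,
          ENNReal.ofReal ((2:ℝ)^m * (stdNormalPdf x * normalCdf 0 (1 - Δᵀ * Δ) (Δᵀ *ᵥ x))) := by
    rw [← exp_image_Iic n y hy]
    rw [lintegral_image_eq_lintegral_abs_det_fderiv_mul volume measurableSet_Iic
      (fun x _ => (expDeriv_hasFDerivAt n x).hasFDerivWithinAt) (exp_injOn n _)]
    apply setLIntegral_congr_fun measurableSet_Iic
    intro x hx
    dsimp only
    rw [expDeriv_det]
    have hpos : ∀ i, 0 < Real.exp (x i) := fun i => Real.exp_pos _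
    have hprodpos : 0 < ∏ i, Real.exp (x i) := Finset.prod_pos fun i _ => hpos i
    have hval : lcfusnPdf Δ (fun i => Real.exp (x i))
        = 2^m * (∏ i, Real.exp (x i))⁻¹ * stdNormalPdf x
            * normalCdf 0 (1 - Δᵀ * Δ) (Δᵀ *ᵥ x) := by
      unfold lcfusnPdf
      rw [if_pos hpos]
      simp [Real.log_exp]
    rw [hval, abs_of_pos hprodpos, ← ENNReal.ofReal_mul hprodpos.le]
    congr 1
    field_simp
  -- conclumination
  have hΩcdf : (∫⁻ z in Set.Iic (Sum.elim t (0 : Fin m → ℝ)),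
        ENNReal.ofReal (normalPdf 0 (Matrix.fromBlocks 1 (-Δ) (-Δᵀ) 1) z))
      = ENNReal.ofReal (normalCdf 0 (Matrix.fromBlocks 1 (-Δ) (-Δᵀ) 1)
          (Sum.elim t (0 : Fin m → ℝ))) :=
    (MeasureTheory.ofReal_integral_eq_lintegral_ofReal
      ((integrable_normalPdf hΩpd).integrableOn)
      (ae_of_all _ fun z => normalPdf_nonneg _ _ z hΩdet.le)).symm
  have hchain : (∫⁻ u in Set.Iic y, ENNReal.ofReal (lcfusnPdf Δ u))
      = ENNReal.ofReal ((2:ℝ)^m)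
        * ENNReal.ofReal (normalCdf 0 (Matrix.fromBlocks 1 (-Δ) (-Δᵀ) 1)
            (Sum.elim t (0 : Fin m → ℝ))) := by
    rw [hrestr, hcov]
    have hpt : ∀ x : Fin n → ℝ,
        ENNReal.ofReal ((2:ℝ)^m * (stdNormalPdf x * normalCdf 0 (1 - Δᵀ * Δ) (Δᵀ *ᵥ x)))
          = ENNReal.ofReal ((2:ℝ)^m)
            * ENNReal.ofReal (stdNormalPdf x * normalCdf 0 (1 - Δᵀ * Δ) (Δᵀ *ᵥ x)) :=
      fun x => ENNReal.ofReal_mul (by positivity)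
    rw [lintegral_congr hpt, lintegral_const_mul' _ _ ENNReal.ofReal_ne_top, ← hOmega, hΩcdf]
  rw [hsetY, ← Measure.map_apply hY measurableSet_Iic, hlaw,
    withDensity_apply _ measurableSet_Iic, hchain, ENNReal.toReal_mul,
    ENNReal.toReal_ofReal (show (0:ℝ) ≤ 2^m by positivity),
    ENNReal.toReal_ofReal (normalCdf_nonneg _ _ _ hΩdet.le)]
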